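/- Let A be an m×n complex matrix decomposed into blocks A = [B; G], where B is an m₁×n matrix, G is an m₂×n matrix and m = m₁ + m₂. Consider an orthogonal decomposition ℂⁿ = E⁻ ⊕ E⁺ where E⁻ and E⁺ are spanned by two complementary sets of eigenvectors of B*B. Let s_A = s_min(A), s_B = inf over unit vectors x ∈ E⁺ of ‖Bx‖₂, and s_G = inf over unit vectors x ∈ E⁻ of ‖Gx‖₂. Then s_A ≥ s_B · s_G / (4‖A‖). -/

import Mathlib

open Matrix
open scoped ComplexInnerProductSpace

noncomputable def eNormC {ι : Type*} [Fintype ι] (v : ι → ℂ) : ℝ :=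
  Real.sqrt (∑ i, ‖v i‖ ^ 2)

lemma eNormC_nonneg {ι : Type*} [Fintype ι] (v : ι → ℂ) : 0 ≤ eNormC v :=
  Real.sqrt_nonneg _

lemma eNormC_eq_norm {ι : Type*} [Fintype ι] (v : ι → ℂ) :
    eNormC v = ‖((WithLp.equiv 2 (ι → ℂ)).symm v : EuclideanSpace ℂ ι)‖ := by
  rw [EuclideanSpace.norm_eq]; rfl

lemma eNormC_fromRows_sq {m₁ m₂ n : ℕ} (B : Matrix (Fin m₁) (Fin n) ℂ)
    (G : Matrix (Fin m₂) (Fin n) ℂ) (x : Fin n → ℂ) :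
    eNormC (fromRows B G *ᵥ x) ^ 2 = eNormC (B *ᵥ x) ^ 2 + eNormC (G *ᵥ x) ^ 2 := by
  have h : ∀ {ι : Type} [Fintype ι] (v : ι → ℂ), eNormC v ^ 2 = ∑ i, ‖v i‖ ^ 2 := by
    intro ι _ v
    exact Real.sq_sqrt (Finset.sum_nonneg fun i _ => by positivity)
  rw [h, h, h, Fintype.sum_sum_type]
  simp [fromRows_mulVec]

lemma eNormC_left_le {m₁ m₂ n : ℕ} (B : Matrix (Fin m₁) (Fin n) ℂ)
    (G : Matrix (Fin m₂) (Fin n) ℂ) (x : Fin n → ℂ) :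
    eNormC (B *ᵥ x) ≤ eNormC (fromRows B G *ᵥ x) := by
  nlinarith [eNormC_fromRows_sq B G x, eNormC_nonneg (B *ᵥ x), eNormC_nonneg (G *ᵥ x),
    eNormC_nonneg (fromRows B G *ᵥ x)]

lemma eNormC_right_le {m₁ m₂ n : ℕ} (B : Matrix (Fin m₁) (Fin n) ℂ)
    (G : Matrix (Fin m₂) (Fin n) ℂ) (x : Fin n → ℂ) :
    eNormC (G *ᵥ x) ≤ eNormC (fromRows B G *ᵥ x) := by
  nlinarith [eNormC_fromRows_sq B G x, eNormC_nonneg (B *ᵥ x), eNormC_nonneg (G *ᵥ x),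
    eNormC_nonneg (fromRows B G *ᵥ x)]

lemma final_arith (sB sG M a b r : ℝ) (hM : 0 < M) (hsB : 0 ≤ sB) (hsG : 0 ≤ sG)
    (hsBM : sB ≤ M) (hsGM : sG ≤ M) (ha : 0 ≤ a) (hb : 0 ≤ b)
    (hab : b ^ 2 + a ^ 2 = 1) (h1 : sB * a ≤ r) (h2 : sG * b - M * a ≤ r) :
    sB * sG / (4 * M) ≤ r := by
  rcases le_or_gt (sG / (4 * M)) a with hc | hc
  · calc sB * sG / (4 * M) = sB * (sG / (4 * M)) := by ring
      _ ≤ sB * a := mul_le_mul_of_nonneg_left hc hsB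
      _ ≤ r := h1
  · have h4M : (0 : ℝ) < 4 * M := by linarith
    have h := (lt_div_iff₀ h4M).1 hc
    have ha4 : a ≤ 1 / 4 := le_of_mul_le_mul_right (by linarith) h4M
    have hb2 : 1 / 2 ≤ b := by nlinarith
    have hMa : M * a ≤ sG / 4 := by linarith
    have hr : sG / 4 ≤ r := by
      nlinarith [mul_nonneg hsG (by linarith : (0 : ℝ) ≤ b - 1 / 2)]
    have hMne : M ≠ 0 := hM.ne'
    calc sB * sG / (4 * M) ≤ M * sG / (4 * M) := by gcongr
      _ = sG / 4 := by field_simp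
      _ ≤ r := hr

/-- Decomposition lemma (Lemma "Decomposition"): a lower bound for the smallest singular
value of a block matrix `A = [B; G]`, given lower bounds for `B` on `E⁺` and for `G` on
`E⁻`, where `ℂⁿ = E⁻ ⊕ E⁺` is an orthogonal decomposition into spans of complementary
sets of eigenvectors of `B* B`. -/
theorem decomposition_smallest_singular_value
    (m₁ m₂ n : ℕ) (B : Matrix (Fin m₁) (Fin n) ℂ) (G : Matrix (Fin m₂) (Fin n) ℂ)
    (Eminus Eplus : Submodule ℂ (EuclideanSpace ℂ (Fin n)))
    -- orthogonal decomposition `ℂⁿ = E⁻ ⊕ E⁺`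
    (hperp : Eplus = Eminusᗮ)
    -- `E⁻` (and hence also `E⁺`) is an invariant subspace of the Hermitian matrix `B* B`,
    -- i.e. `E⁻` and `E⁺` are spanned by complementary sets of eigenvectors of `B* B`
    (hinv : ∀ x : EuclideanSpace ℂ (Fin n), x ∈ Eminus →
      ((WithLp.equiv 2 (Fin n → ℂ)).symm
        ((Bᴴ * B) *ᵥ (WithLp.equiv 2 (Fin n → ℂ)) x)) ∈ Eminus) :
    -- `s_A ≥ s_B s_G / (4 ‖A‖)`, where `A = [B; G]`
    sInf {r | ∃ x : EuclideanSpace ℂ (Fin n), x ∈ Eplus ∧ ‖x‖ = 1 ∧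
        r = eNormC (B *ᵥ (WithLp.equiv 2 (Fin n → ℂ)) x)} *
      sInf {r | ∃ x : EuclideanSpace ℂ (Fin n), x ∈ Eminus ∧ ‖x‖ = 1 ∧
        r = eNormC (G *ᵥ (WithLp.equiv 2 (Fin n → ℂ)) x)} /
      (4 * sSup {r | ∃ x : Fin n → ℂ, eNormC x = 1 ∧
        r = eNormC (fromRows B G *ᵥ x)}) ≤
    sInf {r | ∃ x : Fin n → ℂ, eNormC x = 1 ∧ r = eNormC (fromRows B G *ᵥ x)} := by
  classical
  subst hperp
  set SBs : Set ℝ := {r | ∃ x : EuclideanSpace ℂ (Fin n), x ∈ Eminusᗮ ∧ ‖x‖ = 1 ∧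
      r = eNormC (B *ᵥ (WithLp.equiv 2 (Fin n → ℂ)) x)} with hSBs
  set SGs : Set ℝ := {r | ∃ x : EuclideanSpace ℂ (Fin n), x ∈ Eminus ∧ ‖x‖ = 1 ∧
      r = eNormC (G *ᵥ (WithLp.equiv 2 (Fin n → ℂ)) x)} with hSGs
  set SAs : Set ℝ := {r | ∃ x : Fin n → ℂ, eNormC x = 1 ∧
      r = eNormC (fromRows B G *ᵥ x)} with hSAs
  set sB := sInf SBs
  set sG := sInf SGs
  set M := sSup SAs
  have hsBnn : 0 ≤ sB := Real.sInf_nonneg (by rintro r ⟨x, -, -, rfl⟩; exact eNormC_nonneg _)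
  have hsGnn : 0 ≤ sG := Real.sInf_nonneg (by rintro r ⟨x, -, -, rfl⟩; exact eNormC_nonneg _)
  have hsAnn : 0 ≤ sInf SAs := Real.sInf_nonneg (by rintro r ⟨x, -, rfl⟩; exact eNormC_nonneg _)
  -- trivial cases
  rcases le_or_gt M 0 with hM | hM
  · refine le_trans ?_ hsAnn
    exact div_nonpos_of_nonneg_of_nonpos (mul_nonneg hsBnn hsGnn) (by linarith)
  rcases Set.eq_empty_or_nonempty SBs with hB0 | hBne
  · have hsB0 : sB = 0 := by
      rw [show sB = sInf SBs from rfl, hB0, Real.sInf_empty]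
    simp only [hsB0, zero_mul, zero_div]
    exact hsAnn
  rcases Set.eq_empty_or_nonempty SGs with hG0 | hGne
  · have hsG0 : sG = 0 := by
      rw [show sG = sInf SGs from rfl, hG0, Real.sInf_empty]
    simp only [hsG0, mul_zero, zero_div]
    exact hsAnn
  -- linear maps
  set TA := Matrix.toEuclideanLin (fromRows B G)
  set TB := Matrix.toEuclideanLin B
  set TG := Matrix.toEuclideanLin G
  have hTA : ∀ v : Fin n → ℂ, eNormC (fromRows B G *ᵥ v)
      = ‖TA ((WithLp.equiv 2 (Fin n → ℂ)).symm v)‖ := fun v => eNormC_eq_norm _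
  have hTB : ∀ v : Fin n → ℂ, eNormC (B *ᵥ v)
      = ‖TB ((WithLp.equiv 2 (Fin n → ℂ)).symm v)‖ := fun v => eNormC_eq_norm _
  have hTG : ∀ v : Fin n → ℂ, eNormC (G *ᵥ v)
      = ‖TG ((WithLp.equiv 2 (Fin n → ℂ)).symm v)‖ := fun v => eNormC_eq_norm _
  have hunit : ∀ y : EuclideanSpace ℂ (Fin n),
      eNormC ((WithLp.equiv 2 (Fin n → ℂ)) y) = ‖y‖ := by
    intro y; rw [eNormC_eq_norm]; simp
  -- SAs is bounded above
  have hbdd : BddAbove SAs := by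
    refine ⟨‖LinearMap.toContinuousLinearMap TA‖, ?_⟩
    rintro r ⟨v, hv, rfl⟩
    rw [hTA v]
    have h := (LinearMap.toContinuousLinearMap TA).le_opNorm
      ((WithLp.equiv 2 (Fin n → ℂ)).symm v)
    simp only [LinearMap.coe_toContinuousLinearMap'] at h
    rw [← eNormC_eq_norm, hv, mul_one] at h
    exact h
  -- operator norm bound
  have hMle : ∀ y : EuclideanSpace ℂ (Fin n), ‖TA y‖ ≤ M * ‖y‖ := by
    intro y
    rcases eq_or_ne y 0 with rfl | hy
    · simp
    · have hny : (0 : ℝ) < ‖y‖ := norm_pos_iff.2 hy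
      have hmem : ‖TA ((‖y‖ : ℂ)⁻¹ • y)‖ ∈ SAs := by
        refine ⟨(WithLp.equiv 2 (Fin n → ℂ)) ((‖y‖ : ℂ)⁻¹ • y), ?_, ?_⟩
        · rw [hunit]; simp [norm_smul, hny.ne']
        · rw [hTA]; simp
      have := le_csSup hbdd hmem
      rw [_root_.map_smul, norm_smul] at this
      simp only [norm_inv, Complex.norm_real, norm_norm] at this
      calc ‖TA y‖ = ‖y‖ * (‖y‖⁻¹ * ‖TA y‖) := by field_simp
      _ ≤ ‖y‖ * M := by exact mul_le_mul_of_nonneg_left this hny.le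
      _ = M * ‖y‖ := mul_comm _ _
  -- lower bounds from sB / sG
  have hBlow : ∀ q : EuclideanSpace ℂ (Fin n), q ∈ Eminusᗮ → sB * ‖q‖ ≤ ‖TB q‖ := by
    intro q hq
    rcases eq_or_ne q 0 with rfl | hq0
    · simp
    · have hnq : (0 : ℝ) < ‖q‖ := norm_pos_iff.2 hq0
      have hmem : ‖TB ((‖q‖ : ℂ)⁻¹ • q)‖ ∈ SBs := by
        refine ⟨(‖q‖ : ℂ)⁻¹ • q, Submodule.smul_mem _ _ hq, by simp [norm_smul, hnq.ne'], ?_⟩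
        rw [hTB]; simp
      have h1 : sB ≤ ‖TB ((‖q‖ : ℂ)⁻¹ • q)‖ :=
        csInf_le ⟨0, by rintro r ⟨x, -, -, rfl⟩; exact eNormC_nonneg _⟩ hmem
      rw [_root_.map_smul, norm_smul] at h1
      simp only [norm_inv, Complex.norm_real, norm_norm] at h1
      calc sB * ‖q‖ ≤ (‖q‖⁻¹ * ‖TB q‖) * ‖q‖ := mul_le_mul_of_nonneg_right h1 hnq.le
      _ = ‖TB q‖ := by field_simp
  have hGlow : ∀ p : EuclideanSpace ℂ (Fin n), p ∈ Eminus → sG * ‖p‖ ≤ ‖TG p‖ := by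
    intro p hp
    rcases eq_or_ne p 0 with rfl | hp0
    · simp
    · have hnp : (0 : ℝ) < ‖p‖ := norm_pos_iff.2 hp0
      have hmem : ‖TG ((‖p‖ : ℂ)⁻¹ • p)‖ ∈ SGs := by
        refine ⟨(‖p‖ : ℂ)⁻¹ • p, Submodule.smul_mem _ _ hp, by simp [norm_smul, hnp.ne'], ?_⟩
        rw [hTG]; simp
      have h1 : sG ≤ ‖TG ((‖p‖ : ℂ)⁻¹ • p)‖ :=
        csInf_le ⟨0, by rintro r ⟨x, -, -, rfl⟩; exact eNormC_nonneg _⟩ hmem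
      rw [_root_.map_smul, norm_smul] at h1
      simp only [norm_inv, Complex.norm_real, norm_norm] at h1
      calc sG * ‖p‖ ≤ (‖p‖⁻¹ * ‖TG p‖) * ‖p‖ := mul_le_mul_of_nonneg_right h1 hnp.le
      _ = ‖TG p‖ := by field_simp
  -- sB ≤ M and sG ≤ M
  have hsBM : sB ≤ M := by
    obtain ⟨r, x, hx, hx1, rfl⟩ := hBne
    refine le_trans (csInf_le ⟨0, by rintro r ⟨x, -, -, rfl⟩; exact eNormC_nonneg _⟩
      ⟨x, hx, hx1, rfl⟩) ?_
    calc eNormC (B *ᵥ (WithLp.equiv 2 (Fin n → ℂ)) x)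
        ≤ eNormC (fromRows B G *ᵥ (WithLp.equiv 2 (Fin n → ℂ)) x) := eNormC_left_le _ _ _
      _ = ‖TA x‖ := by rw [hTA]; simp
      _ ≤ M * ‖x‖ := hMle x
      _ = M := by rw [hx1, mul_one]
  have hsGM : sG ≤ M := by
    obtain ⟨r, x, hx, hx1, rfl⟩ := hGne
    refine le_trans (csInf_le ⟨0, by rintro r ⟨x, -, -, rfl⟩; exact eNormC_nonneg _⟩
      ⟨x, hx, hx1, rfl⟩) ?_
    calc eNormC (G *ᵥ (WithLp.equiv 2 (Fin n → ℂ)) x)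
        ≤ eNormC (fromRows B G *ᵥ (WithLp.equiv 2 (Fin n → ℂ)) x) := eNormC_right_le _ _ _
      _ = ‖TA x‖ := by rw [hTA]; simp
      _ ≤ M * ‖x‖ := hMle x
      _ = M := by rw [hx1, mul_one]
  -- SAs nonempty
  have hAne : SAs.Nonempty := by
    obtain ⟨r, x, hx, hx1, -⟩ := hBne
    exact ⟨eNormC (fromRows B G *ᵥ (WithLp.equiv 2 (Fin n → ℂ)) x),
      (WithLp.equiv 2 (Fin n → ℂ)) x, by rw [hunit, hx1], rfl⟩
  -- main bound
  refine le_csInf hAne ?_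
  rintro r ⟨x, hx1, rfl⟩
  set y : EuclideanSpace ℂ (Fin n) := (WithLp.equiv 2 (Fin n → ℂ)).symm x with hy
  have hyn : ‖y‖ = 1 := by rw [← eNormC_eq_norm]; exact hx1
  set p : EuclideanSpace ℂ (Fin n) := (Eminus.orthogonalProjectionOnto y : EuclideanSpace ℂ (Fin n))
  set q : EuclideanSpace ℂ (Fin n) := y - p with hqdef
  have hp : p ∈ Eminus := SetLike.coe_mem _
  have hq : q ∈ Eminusᗮ := Eminus.sub_starProjection_mem_orthogonal y
  have hpq : p + q = y := by simp [hqdef]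
  -- Pythagoras on y
  have hyd : ‖p‖ ^ 2 + ‖q‖ ^ 2 = 1 := by
    have h0 : ⟪p, q⟫ = 0 := Submodule.inner_right_of_mem_orthogonal hp hq
    have := norm_add_sq_eq_norm_sq_add_norm_sq_of_inner_eq_zero p q h0
    rw [hpq, hyn] at this
    rw [sq, sq]
    linarith
  set a := ‖q‖
  set b := ‖p‖
  have ha : 0 ≤ a := norm_nonneg _
  have hb : 0 ≤ b := norm_nonneg _
  -- orthogonality of TB p and TB q
  have horth : ⟪TB p, TB q⟫ = 0 := by
    have hz : LinearMap.adjoint TB (TB p) ∈ Eminus := by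
      rw [← Matrix.toEuclideanLin_conjTranspose_eq_adjoint]
      have h2 : Matrix.toEuclideanLin Bᴴ (TB p)
          = (WithLp.equiv 2 (Fin n → ℂ)).symm
            ((Bᴴ * B) *ᵥ (WithLp.equiv 2 (Fin n → ℂ)) p) := by
        rw [Matrix.toEuclideanLin_apply, Matrix.toEuclideanLin_apply]
        simp [mulVec_mulVec]
      rw [h2]
      exact hinv p hp
    have h3 : ⟪TB q, TB p⟫ = 0 := by
      rw [← LinearMap.adjoint_inner_right]
      exact (Submodule.mem_orthogonal' _ _).1 hq _ hz
    rw [← inner_conj_symm, h3, map_zero]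
  -- norm of TB y
  have hTBy : ‖TB q‖ ≤ ‖TB y‖ := by
    have h4 := norm_add_sq_eq_norm_sq_add_norm_sq_of_inner_eq_zero (TB p) (TB q) horth
    have h5 : TB p + TB q = TB y := by rw [← map_add, hpq]
    rw [h5] at h4
    nlinarith [norm_nonneg (TB q), norm_nonneg (TB y), norm_nonneg (TB p)]
  have hrB : sB * a ≤ eNormC (fromRows B G *ᵥ x) := by
    calc sB * a ≤ ‖TB q‖ := hBlow q hq
      _ ≤ ‖TB y‖ := hTBy
      _ = eNormC (B *ᵥ x) := by rw [hTB]
      _ ≤ eNormC (fromRows B G *ᵥ x) := eNormC_left_le _ _ _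
  have hrG : sG * b - M * a ≤ eNormC (fromRows B G *ᵥ x) := by
    have h6 : ‖TG p‖ ≤ ‖TG y‖ + ‖TG q‖ := by
      have hyq : TG y - TG q = TG p := by rw [← hpq, map_add]; abel
      calc ‖TG p‖ = ‖TG y - TG q‖ := by rw [hyq]
        _ ≤ ‖TG y‖ + ‖TG q‖ := norm_sub_le _ _
    have h7 : ‖TG q‖ ≤ M * a := by
      calc ‖TG q‖ = eNormC (G *ᵥ (WithLp.equiv 2 (Fin n → ℂ)) q) := by rw [hTG]; simp
        _ ≤ eNormC (fromRows B G *ᵥ (WithLp.equiv 2 (Fin n → ℂ)) q) := eNormC_right_le _ _ _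
        _ = ‖TA q‖ := by rw [hTA]; simp
        _ ≤ M * a := hMle q
    have h8 : sG * b ≤ ‖TG p‖ := hGlow p hp
    have h9 : ‖TG y‖ = eNormC (G *ᵥ x) := by rw [hTG]
    have h10 : eNormC (G *ᵥ x) ≤ eNormC (fromRows B G *ᵥ x) := eNormC_right_le _ _ _
    linarith
  exact final_arith sB sG M a b _ hM hsBnn hsGnn hsBM hsGM ha hb hyd hrB hrG
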